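/- The group H = ⟨a, b, c | a² = b² = c² = (ab)³ = (bc)³ = (ca)³ = (abac)³ = 1⟩ has order 54; its center is cyclic of order 3 generated by (abc)², and H/Z(H) has order 18. -/

import Mathlib

set_option maxRecDepth 100000
set_option maxHeartbeats 1000000


/-- Relations of the group H = ⟨a,b,c | a²=b²=c²=(ab)³=(bc)³=(ca)³=(abac)³=1⟩. -/
def hRels : Set (FreeGroup (Fin 3)) :=
  { (FreeGroup.of 0) ^ 2, (FreeGroup.of 1) ^ 2, (FreeGroup.of 2) ^ 2,
    (FreeGroup.of 0 * FreeGroup.of 1) ^ 3,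
    (FreeGroup.of 1 * FreeGroup.of 2) ^ 3,
    (FreeGroup.of 2 * FreeGroup.of 0) ^ 3,
    (FreeGroup.of 0 * FreeGroup.of 1 * FreeGroup.of 0 * FreeGroup.of 2) ^ 3 }


def KK := (ZMod 3 × ZMod 3 × ZMod 3) × ZMod 2

namespace KK

instance : Fintype KK := inferInstanceAs (Fintype ((ZMod 3 × ZMod 3 × ZMod 3) × ZMod 2))
instance : DecidableEq KK := inferInstanceAs (DecidableEq ((ZMod 3 × ZMod 3 × ZMod 3) × ZMod 2))

def s (e : ZMod 2) : ZMod 3 := 1 - 2 * (e.val : ZMod 3)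

def mk' (x y z : ZMod 3) (e : ZMod 2) : KK := ((x, y, z), e)

instance : Mul KK :=
  ⟨fun p q => mk' (p.1.1 + s p.2 * q.1.1) (p.1.2.1 + s p.2 * q.1.2.1)
    (p.1.2.2 + q.1.2.2 - (p.2.val : ZMod 3) * q.1.2.1 - s p.2 * q.1.1 * p.1.2.1) (p.2 + q.2)⟩

instance : One KK := ⟨mk' 0 0 0 0⟩

instance : Inv KK :=
  ⟨fun p => mk' (-(s p.2) * p.1.1) (-(s p.2) * p.1.2.1)
    (-p.1.2.2 - p.1.1 * p.1.2.1 + (p.2.val : ZMod 3) * p.1.2.1) p.2⟩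

lemma kmul_def (x y z x' y' z' : ZMod 3) (e e' : ZMod 2) :
    mk' x y z e * mk' x' y' z' e' =
      mk' (x + s e * x') (y + s e * y') (z + z' - (e.val : ZMod 3) * y' - s e * x' * y) (e + e') :=
  rfl

lemma two_cases : ∀ e : ZMod 2, e = 0 ∨ e = 1 := by decide

@[simp] lemma v0 : ((0:ZMod 2).val : ZMod 3) = 0 := rfl
@[simp] lemma v1 : ((1:ZMod 2).val : ZMod 3) = 1 := rfl
@[simp] lemma e11 : (1+1 : ZMod 2) = 0 := rfl
@[simp] lemma s0 : s 0 = 1 := rfl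
@[simp] lemma s1 : s 1 = -1 := rfl
lemma mk'_injEq (x y z x' y' z' : ZMod 3) (e e' : ZMod 2) :
    (mk' x y z e = mk' x' y' z' e') ↔ (x = x' ∧ y = y' ∧ z = z' ∧ e = e') := by
  show ((x,y,z),e) = ((x',y',z'),e') ↔ _
  rw [Prod.mk.injEq, Prod.mk.injEq, Prod.mk.injEq]
  tauto

instance : Group KK where
  mul_assoc p q r := by
    obtain ⟨⟨x1, y1, z1⟩, e1⟩ := p
    obtain ⟨⟨x2, y2, z2⟩, e2⟩ := q
    obtain ⟨⟨x3, y3, z3⟩, e3⟩ := r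
    show mk' x1 y1 z1 e1 * mk' x2 y2 z2 e2 * mk' x3 y3 z3 e3
       = mk' x1 y1 z1 e1 * (mk' x2 y2 z2 e2 * mk' x3 y3 z3 e3)
    rcases two_cases e1 with h1 | h1 <;> rcases two_cases e2 with h2 | h2 <;>
      rcases two_cases e3 with h3 | h3 <;> subst h1 h2 h3 <;>
      simp only [kmul_def, v0, v1, e11, s0, s1, zero_add, add_zero, mk'_injEq] <;>
      and_intros <;> (try trivial) <;> ring_nf
  one_mul := by decide
  mul_one := by decide
  inv_mul_cancel := by decide

end KK

namespace KK
def aK : KK := mk' 0 0 0 1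
def uK : KK := mk' 1 0 0 0
def vK : KK := mk' 0 1 0 0
def bK : KK := aK * uK
def cK : KK := aK * uK * vK

def gens : Fin 3 → KK := ![aK, bK, cK]

lemma rels_hold : ∀ r ∈ hRels, FreeGroup.lift gens r = 1 := by
  intro r hr
  simp only [hRels, Set.mem_insert_iff, Set.mem_singleton_iff] at hr
  rcases hr with rfl|rfl|rfl|rfl|rfl|rfl|rfl <;>
    simp only [map_pow, map_mul, FreeGroup.lift_apply_of, gens, Matrix.cons_val_zero,
      Matrix.cons_val_one, Matrix.head_cons, Matrix.cons_val_two, Matrix.tail_cons] <;>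
    decide

end KK


namespace HH

abbrev H := PresentedGroup hRels

def A : H := PresentedGroup.of 0
def B : H := PresentedGroup.of 1
def C : H := PresentedGroup.of 2
def U : H := A * B
def V : H := B * C
def Z : H := U * V * U⁻¹ * V⁻¹

lemma cube (g : H) : g ^ 3 = g * g * g := by
  rw [pow_succ, pow_succ, pow_one]

lemma relmk {r : FreeGroup (Fin 3)} (hr : r ∈ hRels) : PresentedGroup.mk hRels r = 1 :=
  (QuotientGroup.eq_one_iff r).mpr (Subgroup.subset_normalClosure hr)

lemma hA : A * A = 1 := by
  have h := relmk (show (FreeGroup.of 0)^2 ∈ hRels by simp [hRels])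
  rw [map_pow] at h
  calc A * A = (PresentedGroup.mk hRels (FreeGroup.of 0))^2 := by rw [pow_two]; rfl
    _ = 1 := h

lemma hB : B * B = 1 := by
  have h := relmk (show (FreeGroup.of 1)^2 ∈ hRels by simp [hRels])
  rw [map_pow] at h
  calc B * B = (PresentedGroup.mk hRels (FreeGroup.of 1))^2 := by rw [pow_two]; rfl
    _ = 1 := h

lemma hC : C * C = 1 := by
  have h := relmk (show (FreeGroup.of 2)^2 ∈ hRels by simp [hRels])
  rw [map_pow] at h
  calc C * C = (PresentedGroup.mk hRels (FreeGroup.of 2))^2 := by rw [pow_two]; rfl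
    _ = 1 := h

lemma u3 : U ^ 3 = 1 := by
  have h := relmk (show (FreeGroup.of 0 * FreeGroup.of 1)^3 ∈ hRels by simp [hRels])
  rw [map_pow, map_mul] at h
  exact h

lemma v3 : V ^ 3 = 1 := by
  have h := relmk (show (FreeGroup.of 1 * FreeGroup.of 2)^3 ∈ hRels by simp [hRels])
  rw [map_pow, map_mul] at h
  exact h

lemma ca3 : (C * A) ^ 3 = 1 := by
  have h := relmk (show (FreeGroup.of 2 * FreeGroup.of 0)^3 ∈ hRels by simp [hRels])
  rw [map_pow, map_mul] at h
  exact h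

lemma abac3 : (A * B * A * C) ^ 3 = 1 := by
  have h := relmk (show (FreeGroup.of 0 * FreeGroup.of 1 * FreeGroup.of 0 * FreeGroup.of 2)^3 ∈ hRels
    by simp [hRels])
  rw [map_pow, map_mul, map_mul, map_mul] at h
  exact h

lemma invA : A⁻¹ = A := inv_eq_of_mul_eq_one_right hA
lemma invB : B⁻¹ = B := inv_eq_of_mul_eq_one_right hB
lemma invC : C⁻¹ = C := inv_eq_of_mul_eq_one_right hC

lemma UVeq : U * V = A * C := by
  have h : A * B * (B * C) = A * (B * B) * C := by group
  show A * B * (B * C) = A * C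
  rw [h, hB, mul_one]

lemma w3 : (U * V) ^ 3 = 1 := by
  rw [UVeq]
  have h : (A * C) ^ 3 = A * (C * A) ^ 3 * A⁻¹ := by simp only [cube]; group
  rw [h, ca3, mul_one, mul_inv_cancel]

lemma q3 : (U * (U * V)) ^ 3 = 1 := by
  rw [UVeq]
  have h : (U * (A * C)) ^ 3 = (A * B * A * C) ^ 3 := by
    show ((A*B) * (A * C))^3 = _; simp only [cube]; group
  rw [h, abac3]

lemma vu3 : (V * U) ^ 3 = 1 := by
  have h : (V * U) ^ 3 = U⁻¹ * (U * V) ^ 3 * U := by simp only [cube]; group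
  rw [h, w3, mul_one, inv_mul_cancel]

lemma Uinv : U⁻¹ = U * U := by
  have h : U * (U * U) = 1 := by
    have : U * (U * U) = U ^ 3 := by rw [cube]; group
    rw [this, u3]
  exact inv_eq_of_mul_eq_one_right h

lemma Vinv : V⁻¹ = V * V := by
  have h : V * (V * V) = 1 := by
    have : V * (V * V) = V ^ 3 := by rw [cube]; group
    rw [this, v3]
  exact inv_eq_of_mul_eq_one_right h

lemma uu : U⁻¹ * U⁻¹ = U := by
  rw [Uinv]
  have h : U * U * (U * U) = U * U ^ 3 := by rw [cube]; group
  rw [h, u3, mul_one]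

lemma vv : V⁻¹ * V⁻¹ = V := by
  rw [Vinv]
  have h : V * V * (V * V) = V * V ^ 3 := by rw [cube]; group
  rw [h, v3, mul_one]

lemma iuv3 : (U⁻¹ * V) ^ 3 = 1 := by
  rw [Uinv]
  have h : (U * U * V) ^ 3 = (U * (U * V)) ^ 3 := by simp only [cube]; group
  rw [h, q3]

lemma f2 : U * V * U = V⁻¹ * U⁻¹ * V⁻¹ := by
  have h1 : (U * V * U) * (V * U * V) = (U * V) ^ 3 := by simp only [cube]; group
  rw [w3] at h1
  have h2 := eq_inv_of_mul_eq_one_left h1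
  rw [h2]; group

lemma f3 : V * U * V = U⁻¹ * V⁻¹ * U⁻¹ := by
  have h1 : (V * U * V) * (U * V * U) = (V * U) ^ 3 := by simp only [cube]; group
  rw [vu3] at h1
  have h2 := eq_inv_of_mul_eq_one_left h1
  rw [h2]; group

lemma f1' : U⁻¹ * V * U⁻¹ = V⁻¹ * U * V⁻¹ := by
  have h1 : (U⁻¹ * V * U⁻¹) * (V * U⁻¹ * V) = (U⁻¹ * V) ^ 3 := by simp only [cube]; group
  rw [iuv3] at h1
  have h2 := eq_inv_of_mul_eq_one_left h1
  rw [h2]; group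

lemma f1 : V * U⁻¹ = U * V⁻¹ * U * V⁻¹ := by
  calc V * U⁻¹ = U * (U⁻¹ * V * U⁻¹) := by group
    _ = U * (V⁻¹ * U * V⁻¹) := by rw [f1']
    _ = U * V⁻¹ * U * V⁻¹ := by group

lemma f4 : V⁻¹ * U = U⁻¹ * V * U⁻¹ * V := by
  calc V⁻¹ * U = (V⁻¹ * U * V⁻¹) * V := by group
    _ = (U⁻¹ * V * U⁻¹) * V := by rw [← f1']
    _ = U⁻¹ * V * U⁻¹ * V := by group

lemma zuComm : Z * U = U * Z := by
  have E : V * U⁻¹ * (V⁻¹ * U) = U * V * U⁻¹ * V⁻¹ := by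
    calc V * U⁻¹ * (V⁻¹ * U) = (V * U⁻¹) * (V⁻¹ * U) := by group
      _ = (U * V⁻¹ * U * V⁻¹) * (V⁻¹ * U) := by rw [f1]
      _ = U * V⁻¹ * U * ((V⁻¹ * V⁻¹) * U) := by group
      _ = U * V⁻¹ * U * (V * U) := by rw [vv]
      _ = U * V⁻¹ * (U * V * U) := by group
      _ = U * V⁻¹ * (V⁻¹ * U⁻¹ * V⁻¹) := by rw [f2]
      _ = U * (V⁻¹ * V⁻¹) * (U⁻¹ * V⁻¹) := by group
      _ = U * V * (U⁻¹ * V⁻¹) := by rw [vv]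
      _ = U * V * U⁻¹ * V⁻¹ := by group
  show U * V * U⁻¹ * V⁻¹ * U = U * (U * V * U⁻¹ * V⁻¹)
  calc U * V * U⁻¹ * V⁻¹ * U = U * (V * U⁻¹ * (V⁻¹ * U)) := by group
    _ = U * (U * V * U⁻¹ * V⁻¹) := by rw [E]

lemma zvComm : Z * V = V * Z := by
  have F : V * (U * V * U⁻¹ * V⁻¹) * V⁻¹ = U * V * U⁻¹ * V⁻¹ := by
    calc V * (U * V * U⁻¹ * V⁻¹) * V⁻¹ = (V * U * V) * (U⁻¹ * (V⁻¹ * V⁻¹)) := by group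
      _ = (U⁻¹ * V⁻¹ * U⁻¹) * (U⁻¹ * (V⁻¹ * V⁻¹)) := by rw [f3]
      _ = U⁻¹ * V⁻¹ * (U⁻¹ * U⁻¹) * (V⁻¹ * V⁻¹) := by group
      _ = U⁻¹ * V⁻¹ * U * (V⁻¹ * V⁻¹) := by rw [uu]
      _ = U⁻¹ * V⁻¹ * U * V := by rw [vv]
      _ = U⁻¹ * (V⁻¹ * U) * V := by group
      _ = U⁻¹ * (U⁻¹ * V * U⁻¹ * V) * V := by rw [f4]
      _ = (U⁻¹ * U⁻¹) * V * U⁻¹ * (V * V) := by group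
      _ = U * V * U⁻¹ * (V * V) := by rw [uu]
      _ = U * V * U⁻¹ * V⁻¹ := by rw [← Vinv]
  show U * V * U⁻¹ * V⁻¹ * V = V * (U * V * U⁻¹ * V⁻¹)
  calc U * V * U⁻¹ * V⁻¹ * V = (V * (U * V * U⁻¹ * V⁻¹) * V⁻¹) * V := by rw [F]
    _ = V * (U * V * U⁻¹ * V⁻¹) := by group

lemma aU : A * U = U⁻¹ * A := by
  show A * (A * B) = (A * B)⁻¹ * A
  rw [mul_inv_rev, invA, invB]
  calc A * (A * B) = (A * A) * B := by group
    _ = B := by rw [hA, one_mul]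
    _ = B * (A * A) := by rw [hA, mul_one]
    _ = B * A * A := by group

lemma aUi : A * U⁻¹ = U * A := by
  show A * (A * B)⁻¹ = (A * B) * A
  rw [mul_inv_rev, invA, invB]
  calc A * (B * A) = A * B * A := by group

lemma aV : A * V = U * V⁻¹ * U⁻¹ * A := by
  show A * (B * C) = (A * B) * (B * C)⁻¹ * (A * B)⁻¹ * A
  rw [mul_inv_rev, mul_inv_rev, invA, invB, invC]
  calc A * (B * C) = A * (B * (C * 1)) := by group
    _ = A * (B * (C * (B * B))) := by rw [hB]
    _ = A * (B * (C * (B * (B * 1)))) := by rw [mul_one]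
    _ = A * (B * (C * (B * (B * (A * A))))) := by rw [hA]
    _ = A * B * (C * B) * (B * A) * A := by group

lemma aVi : A * V⁻¹ = U * V * U⁻¹ * A := by
  show A * (B * C)⁻¹ = (A * B) * (B * C) * (A * B)⁻¹ * A
  rw [mul_inv_rev, mul_inv_rev, invA, invB, invC]
  calc A * (C * B) = A * (1 * (C * B)) * 1 := by group
    _ = A * ((B * B) * (C * B)) * (A * A) := by rw [hB, hA]
    _ = A * B * (B * C) * (B * A) * A := by group

lemma zaComm : Z * A = A * Z := by
  have key : V⁻¹ * (U * V * U⁻¹) = Z := by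
    calc V⁻¹ * (U * V * U⁻¹) = V⁻¹ * (Z * V) := by show _ = V⁻¹ * ((U * V * U⁻¹ * V⁻¹) * V); group
      _ = V⁻¹ * (V * Z) := by rw [← zvComm]
      _ = Z := by group
  have h : A * Z = V⁻¹ * U * V * U⁻¹ * A := by
    show A * (U * V * U⁻¹ * V⁻¹) = _
    calc A * (U * V * U⁻¹ * V⁻¹) = (A * U) * V * U⁻¹ * V⁻¹ := by group
      _ = (U⁻¹ * A) * V * U⁻¹ * V⁻¹ := by rw [aU]
      _ = U⁻¹ * (A * V) * U⁻¹ * V⁻¹ := by group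
      _ = U⁻¹ * (U * V⁻¹ * U⁻¹ * A) * U⁻¹ * V⁻¹ := by rw [aV]
      _ = V⁻¹ * U⁻¹ * ((A * U⁻¹) * V⁻¹) := by group
      _ = V⁻¹ * U⁻¹ * ((U * A) * V⁻¹) := by rw [aUi]
      _ = V⁻¹ * U⁻¹ * U * (A * V⁻¹) := by group
      _ = V⁻¹ * U⁻¹ * U * (U * V * U⁻¹ * A) := by rw [aVi]
      _ = V⁻¹ * U * V * U⁻¹ * A := by group
  rw [h]
  calc Z * A = (V⁻¹ * (U * V * U⁻¹)) * A := by rw [key]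
    _ = V⁻¹ * U * V * U⁻¹ * A := by group

lemma z3 : Z ^ 3 = 1 := by
  have c1 : Commute Z U := zuComm
  have c2 : Commute Z V := zvComm
  have cz : Commute Z (V * U) := c2.mul_right c1
  have h1 : (U * V) ^ 3 = (Z * (V * U)) ^ 3 := by
    show _ = ((U * V * U⁻¹ * V⁻¹) * (V * U)) ^ 3
    simp only [cube]; group
  rw [cz.mul_pow, w3, vu3, mul_one] at h1
  exact h1.symm

lemma Zinv : Z⁻¹ = Z * Z := by
  have h : Z * (Z * Z) = 1 := by
    have : Z * (Z * Z) = Z ^ 3 := by rw [cube]; group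
    rw [this, z3]
  exact inv_eq_of_mul_eq_one_right h

lemma zz : Z⁻¹ * Z⁻¹ = Z := by
  rw [Zinv]
  have h : Z * Z * (Z * Z) = Z * Z ^ 3 := by rw [cube]; group
  rw [h, z3, mul_one]

/-! ### Rewrite system for normal form `U^i * (V^j * (Z^k * A^e))` -/

lemma zuC (x : H) : Z * (U * x) = U * (Z * x) := by rw [← mul_assoc, zuComm, mul_assoc]
lemma zvC (x : H) : Z * (V * x) = V * (Z * x) := by rw [← mul_assoc, zvComm, mul_assoc]

lemma nVU' : V * U = U * (V * (Z * Z)) := by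
  have h0 : V * U = Z⁻¹ * (U * V) := by
    show V * U = (U * V * U⁻¹ * V⁻¹)⁻¹ * (U * V); group
  rw [h0, Zinv]
  calc Z * Z * (U * V) = Z * (Z * (U * (V * 1))) := by group
    _ = Z * (U * (Z * (V * 1))) := by rw [zuC]
    _ = U * (Z * (Z * (V * 1))) := by rw [zuC]
    _ = U * (Z * (V * (Z * 1))) := by rw [zvC]
    _ = U * (V * (Z * (Z * 1))) := by rw [zvC]
    _ = U * (V * (Z * Z)) := by group

lemma nVU (x : H) : V * (U * x) = U * (V * (Z * (Z * x))) := by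
  rw [← mul_assoc, nVU']; simp only [mul_assoc]

lemma nZU' : Z * U = U * Z := zuComm
lemma nZU (x : H) : Z * (U * x) = U * (Z * x) := zuC x
lemma nZV' : Z * V = V * Z := zvComm
lemma nZV (x : H) : Z * (V * x) = V * (Z * x) := zvC x

lemma nAU' : A * U = U * (U * A) := by
  rw [aU, Uinv]; group

lemma nAU (x : H) : A * (U * x) = U * (U * (A * x)) := by
  rw [← mul_assoc, nAU']; simp only [mul_assoc]

lemma nAZ' : A * Z = Z * A := zaComm.symm
lemma nAZ (x : H) : A * (Z * x) = Z * (A * x) := by rw [← mul_assoc, nAZ', mul_assoc]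

lemma nAV' : A * V = V * (V * (Z * (Z * A))) := by
  have h1 : A * V = V⁻¹ * Z⁻¹ * A := by
    rw [aV]
    have h2 : U * V⁻¹ * U⁻¹ = V⁻¹ * Z⁻¹ := by
      show _ = V⁻¹ * (U * V * U⁻¹ * V⁻¹)⁻¹; group
    rw [h2]
  rw [h1, Vinv, Zinv]
  calc V * V * (Z * Z) * A = V * (V * (Z * (Z * A))) := by group

lemma nAV (x : H) : A * (V * x) = V * (V * (Z * (Z * (A * x)))) := by
  rw [← mul_assoc, nAV']; simp only [mul_assoc]

lemma nUUU (x : H) : U * (U * (U * x)) = x := by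
  have h : U * (U * (U * x)) = U ^ 3 * x := by rw [cube]; group
  rw [h, u3, one_mul]
lemma nUUU' : U * (U * U) = 1 := by
  have h := nUUU 1; rw [mul_one] at h; rw [← h]
lemma nVVV (x : H) : V * (V * (V * x)) = x := by
  have h : V * (V * (V * x)) = V ^ 3 * x := by rw [cube]; group
  rw [h, v3, one_mul]
lemma nVVV' : V * (V * V) = 1 := by
  have h := nVVV 1; rw [mul_one] at h; rw [← h]
lemma nZZZ (x : H) : Z * (Z * (Z * x)) = x := by
  have h : Z * (Z * (Z * x)) = Z ^ 3 * x := by rw [cube]; group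
  rw [h, z3, one_mul]
lemma nZZZ' : Z * (Z * Z) = 1 := by
  have h := nZZZ 1; rw [mul_one] at h; rw [← h]
lemma nAA (x : H) : A * (A * x) = x := by rw [← mul_assoc, hA, one_mul]
lemma nAA' : A * A = 1 := hA

/-! ### Powers indexed by `ZMod` -/

def Pu (n : ZMod 3) : H := U ^ n.val
def Pv (n : ZMod 3) : H := V ^ n.val
def Pz (n : ZMod 3) : H := Z ^ n.val
def Pa (e : ZMod 2) : H := A ^ e.val

lemma zmod3_cases : ∀ n : ZMod 3, n = 0 ∨ n = 1 ∨ n = 2 := by decide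
lemma zmod2_cases : ∀ e : ZMod 2, e = 0 ∨ e = 1 := by decide

lemma Pu0 : Pu 0 = 1 := rfl
lemma Pu1 : Pu 1 = U := by rw [Pu, show (1 : ZMod 3).val = 1 from rfl, pow_one]
lemma Pu2 : Pu 2 = U * U := by rw [Pu, show (2 : ZMod 3).val = 2 from rfl, pow_two]
lemma Pv0 : Pv 0 = 1 := rfl
lemma Pv1 : Pv 1 = V := by rw [Pv, show (1 : ZMod 3).val = 1 from rfl, pow_one]
lemma Pv2 : Pv 2 = V * V := by rw [Pv, show (2 : ZMod 3).val = 2 from rfl, pow_two]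
lemma Pz0 : Pz 0 = 1 := rfl
lemma Pz1 : Pz 1 = Z := by rw [Pz, show (1 : ZMod 3).val = 1 from rfl, pow_one]
lemma Pz2 : Pz 2 = Z * Z := by rw [Pz, show (2 : ZMod 3).val = 2 from rfl, pow_two]
lemma Pa0 : Pa 0 = 1 := rfl
lemma Pa1 : Pa 1 = A := by rw [Pa, show (1 : ZMod 2).val = 1 from rfl, pow_one]

-- arithmetic tables in `ZMod 3` / `ZMod 2`
lemma t11 : (1 + 1 : ZMod 3) = 2 := by decide
lemma t12 : (1 + 2 : ZMod 3) = 0 := by decide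
lemma t21 : (2 + 1 : ZMod 3) = 0 := by decide
lemma t22 : (2 + 2 : ZMod 3) = 1 := by decide
lemma m22 : (2 * 2 : ZMod 3) = 1 := by decide
lemma ng1 : (-1 : ZMod 3) = 2 := by decide
lemma ng2 : (-2 : ZMod 3) = 1 := by decide
lemma e2t : (1 + 1 : ZMod 2) = 0 := by decide

section Plemmas

lemma PuPu' (m n : ZMod 3) : Pu m * Pu n = Pu (m + n) := by
  rcases zmod3_cases m with rfl|rfl|rfl <;> rcases zmod3_cases n with rfl|rfl|rfl <;>
    simp only [Pu0, Pu1, Pu2, t11, t12, t21, t22, zero_add, add_zero, one_mul, mul_one,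
      mul_assoc, nUUU, nUUU']

lemma PuPu (m n : ZMod 3) (x : H) : Pu m * (Pu n * x) = Pu (m + n) * x := by
  rw [← mul_assoc, PuPu']

lemma PvPv' (m n : ZMod 3) : Pv m * Pv n = Pv (m + n) := by
  rcases zmod3_cases m with rfl|rfl|rfl <;> rcases zmod3_cases n with rfl|rfl|rfl <;>
    simp only [Pv0, Pv1, Pv2, t11, t12, t21, t22, zero_add, add_zero, one_mul, mul_one,
      mul_assoc, nVVV, nVVV']

lemma PvPv (m n : ZMod 3) (x : H) : Pv m * (Pv n * x) = Pv (m + n) * x := by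
  rw [← mul_assoc, PvPv']

lemma PzPz' (m n : ZMod 3) : Pz m * Pz n = Pz (m + n) := by
  rcases zmod3_cases m with rfl|rfl|rfl <;> rcases zmod3_cases n with rfl|rfl|rfl <;>
    simp only [Pz0, Pz1, Pz2, t11, t12, t21, t22, zero_add, add_zero, one_mul, mul_one,
      mul_assoc, nZZZ, nZZZ']

lemma PzPz (m n : ZMod 3) (x : H) : Pz m * (Pz n * x) = Pz (m + n) * x := by
  rw [← mul_assoc, PzPz']

lemma PzPu' (k n : ZMod 3) : Pz k * Pu n = Pu n * Pz k :=
  (Commute.pow_pow (zuComm : Commute Z U) k.val n.val)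

lemma PzPu (k n : ZMod 3) (x : H) : Pz k * (Pu n * x) = Pu n * (Pz k * x) := by
  rw [← mul_assoc, PzPu', mul_assoc]

lemma PzPv' (k n : ZMod 3) : Pz k * Pv n = Pv n * Pz k :=
  (Commute.pow_pow (zvComm : Commute Z V) k.val n.val)

lemma PzPv (k n : ZMod 3) (x : H) : Pz k * (Pv n * x) = Pv n * (Pz k * x) := by
  rw [← mul_assoc, PzPv', mul_assoc]

lemma PvPu' (m n : ZMod 3) : Pv m * Pu n = Pu n * (Pv m * Pz (-(m * n))) := by
  rcases zmod3_cases m with rfl|rfl|rfl <;> rcases zmod3_cases n with rfl|rfl|rfl <;>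
    simp only [Pu0, Pu1, Pu2, Pv0, Pv1, Pv2, Pz0, Pz1, Pz2, t11, t12, t21, t22, m22, ng1, ng2,
      neg_zero, zero_mul, mul_zero, one_mul, mul_one, zero_add, add_zero, mul_assoc,
      nVU, nVU', nZU, nZU', nZV, nZV', nUUU, nUUU', nVVV, nVVV', nZZZ, nZZZ']

lemma PvPu (m n : ZMod 3) (x : H) : Pv m * (Pu n * x) = Pu n * (Pv m * (Pz (-(m * n)) * x)) := by
  rw [← mul_assoc, PvPu']; simp only [mul_assoc]

lemma APu' (n : ZMod 3) : A * Pu n = Pu (-n) * A := by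
  rcases zmod3_cases n with rfl|rfl|rfl <;>
    simp only [Pu0, Pu1, Pu2, ng1, ng2, neg_zero, one_mul, mul_one, mul_assoc,
      nAU, nAU', nUUU, nUUU']

lemma APu (n : ZMod 3) (x : H) : A * (Pu n * x) = Pu (-n) * (A * x) := by
  rw [← mul_assoc, APu', mul_assoc]

lemma APz' (k : ZMod 3) : A * Pz k = Pz k * A :=
  (Commute.pow_right (show Commute A Z from nAZ') k.val)

lemma APz (k : ZMod 3) (x : H) : A * (Pz k * x) = Pz k * (A * x) := by
  rw [← mul_assoc, APz', mul_assoc]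

lemma APv' (n : ZMod 3) : A * Pv n = Pv (-n) * (Pz (-n) * A) := by
  rcases zmod3_cases n with rfl|rfl|rfl <;>
    simp only [Pv0, Pv1, Pv2, Pz0, Pz1, Pz2, ng1, ng2, neg_zero, one_mul, mul_one, mul_assoc,
      nAV, nAV', nZV, nZV', nVVV, nVVV', nZZZ, nZZZ']

lemma APv (n : ZMod 3) (x : H) : A * (Pv n * x) = Pv (-n) * (Pz (-n) * (A * x)) := by
  rw [← mul_assoc, APv']; simp only [mul_assoc]

lemma APa (e : ZMod 2) : A * Pa e = Pa (1 + e) := by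
  rcases zmod2_cases e with rfl|rfl <;>
    simp only [Pa0, Pa1, e2t, add_zero, mul_one, nAA']

end Plemmas

end HH


namespace Glue

open HH KK

noncomputable def phi : HH.H →* KK := PresentedGroup.toGroup KK.rels_hold

/-- the normal form map `K → H` -/
def f (p : KK) : HH.H := Pu p.1.1 * (Pv p.1.2.1 * (Pz p.1.2.2 * Pa p.2))

lemma f_mk' (x y z : ZMod 3) (e : ZMod 2) :
    f (KK.mk' x y z e) = Pu x * (Pv y * (Pz z * Pa e)) := rfl

lemma f_mul (p q : KK) : f (p * q) = f p * f q := by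
  obtain ⟨⟨x, y, z⟩, e⟩ := p
  obtain ⟨⟨x', y', z'⟩, e'⟩ := q
  show f (KK.mk' x y z e * KK.mk' x' y' z' e') = f (KK.mk' x y z e) * f (KK.mk' x' y' z' e')
  rw [KK.kmul_def]
  rcases KK.two_cases e with rfl | rfl <;>
    simp only [f_mk', KK.s0, KK.s1, KK.v0, KK.v1, Pa0, Pa1, one_mul, mul_one, zero_mul,
      mul_assoc] <;>
    simp only [PzPu, PzPv, PvPu, PuPu, PvPv, PzPz, APu, APv, APz, APa, one_mul, mul_one] <;>
    (congr 2 <;> try ring) <;> (try (congr 1 <;> try ring)) <;> (try (congr 1 <;> try ring))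

noncomputable def fhom : KK →* HH.H := MonoidHom.mk' f f_mul

def zK : KK := uK * vK * uK⁻¹ * vK⁻¹

lemma phiA : phi HH.A = aK := by
  show phi (PresentedGroup.of 0) = aK
  rw [phi, PresentedGroup.toGroup.of]; rfl

lemma phiB : phi HH.B = bK := by
  show phi (PresentedGroup.of 1) = bK
  rw [phi, PresentedGroup.toGroup.of]; rfl

lemma phiC : phi HH.C = cK := by
  show phi (PresentedGroup.of 2) = cK
  rw [phi, PresentedGroup.toGroup.of]; rfl

lemma phiU : phi HH.U = uK := by
  show phi (HH.A * HH.B) = uK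
  rw [map_mul, phiA, phiB]; decide

lemma phiV : phi HH.V = vK := by
  show phi (HH.B * HH.C) = vK
  rw [map_mul, phiB, phiC]; decide

lemma phiZ : phi HH.Z = zK := by
  show phi (HH.U * HH.V * HH.U⁻¹ * HH.V⁻¹) = zK
  simp only [map_mul, map_inv, phiU, phiV]; rfl

lemma span :
    ∀ p : KK, uK ^ p.1.1.val * (vK ^ p.1.2.1.val * (zK ^ p.1.2.2.val * aK ^ p.2.val)) = p := by
  decide

lemma phi_f (k : KK) : phi (f k) = k := by
  show phi (Pu _ * (Pv _ * (Pz _ * Pa _))) = k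
  rw [map_mul, map_mul, map_mul, Pu, Pv, Pz, Pa, map_pow, map_pow, map_pow, map_pow,
    phiU, phiV, phiZ, phiA]
  exact span k

lemma faK : f aK = HH.A := by
  rw [show aK = KK.mk' 0 0 0 1 from rfl, f_mk', Pu0, Pv0, Pz0, Pa1, one_mul, one_mul, one_mul]

lemma fuK : f uK = HH.U := by
  rw [show uK = KK.mk' 1 0 0 0 from rfl, f_mk', Pu1, Pv0, Pz0, Pa0, one_mul, mul_one, mul_one]

lemma fvK : f vK = HH.V := by
  rw [show vK = KK.mk' 0 1 0 0 from rfl, f_mk', Pu0, Pv1, Pz0, Pa0, one_mul, mul_one, mul_one]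

lemma f_phi : fhom.comp phi = MonoidHom.id HH.H := by
  apply PresentedGroup.ext
  intro x
  fin_cases x
  · show fhom (phi (PresentedGroup.of 0)) = PresentedGroup.of 0
    rw [phi, PresentedGroup.toGroup.of]
    show f aK = _
    rw [faK]; rfl
  · show fhom (phi (PresentedGroup.of 1)) = PresentedGroup.of 1
    rw [phi, PresentedGroup.toGroup.of]
    show f bK = _
    rw [show bK = aK * uK from rfl, f_mul, faK, fuK]
    show HH.A * (HH.A * HH.B) = HH.B
    rw [← mul_assoc, HH.hA, one_mul]
  · show fhom (phi (PresentedGroup.of 2)) = PresentedGroup.of 2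
    rw [phi, PresentedGroup.toGroup.of]
    show f cK = _
    rw [show cK = aK * uK * vK from rfl, f_mul, f_mul, faK, fuK, fvK]
    show HH.A * (HH.A * HH.B) * (HH.B * HH.C) = HH.C
    calc HH.A * (HH.A * HH.B) * (HH.B * HH.C) = (HH.A * HH.A) * ((HH.B * HH.B) * HH.C) := by
          group
      _ = HH.C := by rw [HH.hA, HH.hB, one_mul, one_mul]

noncomputable def eqv : HH.H ≃* KK :=
  MonoidHom.toMulEquiv phi fhom f_phi (MonoidHom.ext phi_f)



noncomputable instance : Finite HH.H := Finite.of_equiv KK eqv.symm.toEquiv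

lemma cardK : Nat.card KK = 54 := by
  rw [Nat.card_eq_fintype_card]; rfl

lemma cardH : Nat.card HH.H = 54 := by
  rw [Nat.card_congr eqv.toEquiv, cardK]

def wH : HH.H := (PresentedGroup.of 0 * PresentedGroup.of 1 * PresentedGroup.of 2) ^ 2
def wK : KK := (aK * bK * cK) ^ 2

lemma eqv_w : eqv wH = wK := by
  show phi ((PresentedGroup.of 0 * PresentedGroup.of 1 * PresentedGroup.of 2) ^ 2) = wK
  rw [map_pow, map_mul, map_mul,
    show phi (PresentedGroup.of 0) = aK from phiA,
    show phi (PresentedGroup.of 1) = bK from phiB,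
    show phi (PresentedGroup.of 2) = cK from phiC]
  rfl

lemma centerK : Subgroup.center KK = Subgroup.zpowers wK := by
  apply le_antisymm
  · intro k hk
    rw [Subgroup.mem_center_iff] at hk
    have key : ∀ k : KK, (∀ g, g * k = k * g) → (k = 1 ∨ k = wK ∨ k = wK * wK) := by decide
    rcases key k hk with rfl | rfl | rfl
    · exact Subgroup.one_mem _
    · exact Subgroup.mem_zpowers _
    · exact Subgroup.mul_mem _ (Subgroup.mem_zpowers _) (Subgroup.mem_zpowers _)
  · rw [Subgroup.zpowers_le, Subgroup.mem_center_iff]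
    decide

lemma centerH : Subgroup.center HH.H = Subgroup.zpowers wH := by
  ext h
  rw [Subgroup.mem_center_iff, Subgroup.mem_zpowers_iff]
  constructor
  · intro hh
    have hc : eqv h ∈ Subgroup.center KK := Subgroup.mem_center_iff.mpr (fun g => by
      obtain ⟨g', rfl⟩ := eqv.surjective g
      rw [← map_mul, ← map_mul, hh g'])
    rw [centerK, Subgroup.mem_zpowers_iff] at hc
    obtain ⟨n, hn⟩ := hc
    exact ⟨n, eqv.injective (by rw [map_zpow, eqv_w, hn])⟩
  · rintro ⟨n, rfl⟩ g
    have hwc : ∀ g : HH.H, g * wH = wH * g := by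
      intro g
      apply eqv.injective
      rw [map_mul, map_mul, eqv_w]
      have hw : wK ∈ Subgroup.center KK := by
        rw [centerK]; exact Subgroup.mem_zpowers _
      exact Subgroup.mem_center_iff.mp hw (eqv g)
    exact Commute.zpow_right (hwc g) n

lemma orderwK : orderOf wK = 3 := by
  have h3 : wK ^ 3 = 1 := by decide
  have h1 : wK ≠ 1 := by decide
  exact orderOf_eq_prime h3 h1

lemma cardCenterH : Nat.card (Subgroup.center HH.H) = 3 := by
  rw [centerH, Nat.card_zpowers]
  have := orderOf_injective (eqv : HH.H →* KK) eqv.injective wH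
  rw [show (eqv : HH.H →* KK) wH = wK from eqv_w] at this
  rw [← this, orderwK]

end Glue


open Glue in
/-- H has order 54, its center is cyclic of order 3 generated by (abc)², and
H/Z(H) has order 18. -/
theorem hGroup_card_center :
    Nat.card (PresentedGroup hRels) = 54 ∧
    Subgroup.center (PresentedGroup hRels) =
      Subgroup.zpowers ((PresentedGroup.of 0 * PresentedGroup.of 1 *
        PresentedGroup.of 2 : PresentedGroup hRels) ^ 2) ∧
    Nat.card (Subgroup.center (PresentedGroup hRels)) = 3 ∧
    Nat.card (PresentedGroup hRels ⧸ Subgroup.center (PresentedGroup hRels)) = 18 := by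
  refine ⟨cardH, centerH, cardCenterH, ?_⟩
  have hq := Subgroup.card_eq_card_quotient_mul_card_subgroup
    (Subgroup.center (PresentedGroup hRels))
  rw [cardH, cardCenterH] at hq
  omega
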